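/- For every molecular tree G, among the molecular trees obtained from G by a permutation of vertices whose root (vertex 1) is central in G, there exists exactly one ≺-largest element (the canonical molecular tree of G). -/

import Mathlib

/-! ### Ordered rooted labelled trees and the order `≺` -/

/-- An ordered rooted tree with an element label and an incoming bond label at each
node; this represents `subtree(G,v)` of a molecular tree `G`. -/
inductive RTree (E : Type) : Type where
  | node : E → ℕ → List (RTree E) → RTree E

namespace RTree

variable {E : Type}

/-- The element label `ℓ(v)` of the root node. -/
def elemLabel : RTree E → E
  | node l _ _ => l

/-- The incoming bond label `in(G,v)`. -/
def inBond : RTree E → ℕ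
  | node _ i _ => i

/-- `childtrees(G,v)`: the ordered list of subtrees of the children of the root. -/
def children : RTree E → List (RTree E)
  | node _ _ c => c

/-- The number of vertices `s` of the subtree. -/
def size : RTree E → ℕ
  | node _ _ c => 1 + (c.attach.map (fun x => size x.1)).sum
decreasing_by
  have := List.sizeOf_lt_of_mem x.2
  simp only [node.sizeOf_spec]
  omega

/-- The depth `d` of the subtree. -/
def depth : RTree E → ℕ
  | node _ _ c => 1 + (c.attach.map (fun x => depth x.1)).foldr max 0
decreasing_by
  have := List.sizeOf_lt_of_mem x.2
  simp only [node.sizeOf_spec]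
  omega

/-- The tuple `R(G,v) = (d, s, c, ℓ(v), in(G,v))`. -/
def R (t : RTree E) : ℕ × ℕ × ℕ × E × ℕ :=
  (t.depth, t.size, t.children.length, t.elemLabel, t.inBond)

/-- The lexicographic extension `⊏` of the fixed strict total order on `𝔼` (given by a
`LinearOrder` on `E`) and the usual `<` on `ℕ` to 5-tuples of the form `R(G,v)`. -/
def Rlt [LinearOrder E] (a b : ℕ × ℕ × ℕ × E × ℕ) : Prop :=
  a.1 < b.1 ∨ (a.1 = b.1 ∧
    (a.2.1 < b.2.1 ∨ (a.2.1 = b.2.1 ∧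
      (a.2.2.1 < b.2.2.1 ∨ (a.2.2.1 = b.2.2.1 ∧
        (a.2.2.2.1 < b.2.2.2.1 ∨ (a.2.2.2.1 = b.2.2.2.1 ∧
          a.2.2.2.2 < b.2.2.2.2)))))))

mutual
  /-- The order `≺` on subtrees (Definition 3 of the paper): the smallest relation
  such that `S₁ ≺ S₂` whenever (1) `R(G₁,v₁) ⊏ R(G₂,v₂)`, or (2) `R(G₁,v₁) = R(G₂,v₂)`
  and `childtrees(G₁,v₁) ≺ childtrees(G₂,v₂)` lexicographically. -/
  inductive Prec [LinearOrder E] : RTree E → RTree E → Prop where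
    | base {t₁ t₂ : RTree E} : Rlt (R t₁) (R t₂) → Prec t₁ t₂
    | ofChildren {t₁ t₂ : RTree E} :
        R t₁ = R t₂ → PrecList t₁.children t₂.children → Prec t₁ t₂

  /-- The lexicographic extension of `≺` to tuples of subtrees. -/
  inductive PrecList [LinearOrder E] : List (RTree E) → List (RTree E) → Prop where
    | head {a b : RTree E} {l₁ l₂ : List (RTree E)} :
        Prec a b → PrecList (a :: l₁) (b :: l₂)
    | tail {a : RTree E} {l₁ l₂ : List (RTree E)} :
        PrecList l₁ l₂ → PrecList (a :: l₁) (a :: l₂)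
end

end RTree

/-! ### Molecular graphs and molecular trees -/

/-- A molecular graph `G = (V, E, ℓ, b)`: vertices are `Fin k` (representing
`{1, …, k}`, `k ≥ 1`, with vertex `1` corresponding to the index `0`); the undirected
edges are the unordered pairs `e` with `bond e > 0` (no self-loops), labelled by
`bond`; `ℓ` is given by `label`. -/
structure MolGraph (El : Type) where
  k : ℕ
  k_pos : 0 < k
  bond : Sym2 (Fin k) → ℕ
  bond_irrefl : ∀ v : Fin k, bond s(v, v) = 0
  label : Fin k → El

namespace MolGraph

variable {El : Type}

/-- The underlying simple graph of a molecular graph. -/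
def toSimple (G : MolGraph El) : SimpleGraph (Fin G.k) where
  Adj u v := u ≠ v ∧ 0 < G.bond s(u, v)
  symm := by
    constructor
    intro u v h
    exact ⟨h.1.symm, by rw [Sym2.eq_swap]; exact h.2⟩
  loopless := ⟨fun v h => h.1 rfl⟩

instance (G : MolGraph El) : DecidableRel G.toSimple.Adj :=
  fun u v => inferInstanceAs (Decidable (u ≠ v ∧ 0 < G.bond s(u, v)))

/-- The root: vertex `1` of the molecular graph. -/
def root (G : MolGraph El) : Fin G.k := ⟨0, G.k_pos⟩

/-- `Descend G v u` states that `u` belongs to the subtree rooted at `v`: every walk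
from the root to `u` passes through `v`. -/
def Descend (G : MolGraph El) (v u : Fin G.k) : Prop :=
  ∀ p : G.toSimple.Walk G.root u, v ∈ p.support

/-- `G` is a molecular tree: it is connected and free of cycles, and the natural
order of the vertices `1, …, k` corresponds to a depth-first search of the tree
rooted at vertex `1`.  The latter is characterized by preorder numbering: every
vertex is the minimum of its subtree, and each subtree is an interval of vertices. -/
def IsMolTree (G : MolGraph El) : Prop :=
  G.toSimple.IsTree ∧
  (∀ v u : Fin G.k, G.Descend v u → v ≤ u) ∧
  (∀ v u w : Fin G.k, G.Descend v u → v ≤ w → w ≤ u → G.Descend v w)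

/-- The ordered children of `v` in a DFS-numbered molecular tree: the neighbours of
`v` that are larger than `v`, in increasing order. -/
def childrenList (G : MolGraph El) (v : Fin G.k) : List (Fin G.k) :=
  (Finset.univ.filter (fun w => G.toSimple.Adj v w ∧ v < w)).sort (· ≤ ·)

/-- The incoming bond label `in(G,v)`: the bond to the parent (the unique smaller
neighbour in a DFS-numbered molecular tree), and `0` for the root. -/
def inBondNat (G : MolGraph El) (v : Fin G.k) : ℕ :=
  ∑ w ∈ Finset.univ.filter (fun w => G.toSimple.Adj v w ∧ w < v), G.bond s(v, w)

/-- `subtree(G,v)` of a DFS-numbered molecular tree, as an ordered rooted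
labelled tree. -/
def toRTree (G : MolGraph El) (v : Fin G.k) : RTree El :=
  RTree.node (G.label v) (G.inBondNat v)
    ((G.childrenList v).attach.map (fun w => G.toRTree w.1))
termination_by G.k - v.val
decreasing_by
  have hw : w.1 ∈ G.childrenList v := w.2
  simp only [childrenList, Finset.mem_sort, Finset.mem_filter] at hw
  have h1 : (v : ℕ) < (w.1 : ℕ) := hw.2.2
  have h2 : (w.1 : ℕ) < G.k := w.1.isLt
  omega

/-- The order `≺` on molecular trees: `G₁ ≺ G₂` iff `subtree(G₁,1) ≺ subtree(G₂,1)`. -/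
def PrecT [LinearOrder El] (G₁ G₂ : MolGraph El) : Prop :=
  RTree.Prec (G₁.toRTree G₁.root) (G₂.toRTree G₂.root)

/-- The molecular graph obtained from `G` by the vertex permutation `σ`: vertex `v`
of the new graph corresponds to vertex `σ v` of `G`. -/
def permute (G : MolGraph El) (σ : Equiv.Perm (Fin G.k)) : MolGraph El where
  k := G.k
  k_pos := G.k_pos
  bond := fun e => G.bond (e.map σ)
  bond_irrefl := by
    intro v
    show G.bond (Sym2.map σ s(v, v)) = 0
    rw [Sym2.map_pair_eq]
    exact G.bond_irrefl (σ v)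
  label := fun v => G.label (σ v)

end MolGraph

/-! ### Central vertices -/

/-- A longest simple path: a path of maximum length (number of vertices) among all
simple paths of the graph. -/
def IsLongestPath {V : Type} (G : SimpleGraph V) {a b : V} (p : G.Walk a b) : Prop :=
  p.IsPath ∧ ∀ (x y : V) (q : G.Walk x y), q.IsPath → q.support.length ≤ p.support.length

/-- The central vertices of a simple path `v_1, …, v_n` (1-indexed) are the `v_i` with
`i ∈ {⌈(n+1)/2⌉, ⌊(n+1)/2⌋}`; in `ℕ`, `⌈(n+1)/2⌉ = (n+2)/2` and `⌊(n+1)/2⌋ = (n+1)/2`. -/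
def centralInPath {V : Type} {G : SimpleGraph V} {a b : V} (p : G.Walk a b) (v : V) : Prop :=
  ∃ i : ℕ,
    (i = (p.support.length + 2) / 2 ∨ i = (p.support.length + 1) / 2) ∧
    ∃ h : i - 1 < p.support.length, p.support.get ⟨i - 1, h⟩ = v

/-- A vertex is central in a tree if it is central in some longest simple path. -/
def IsCentral {V : Type} (G : SimpleGraph V) (v : V) : Prop :=
  ∃ (a b : V) (p : G.Walk a b), IsLongestPath G p ∧ centralInPath p v

open MolGraph
namespace RTree

variable {E : Type} [LinearOrder E]

/-- Encoding of 5-tuples into nested lexicographic products. -/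
def key5 (a : ℕ × ℕ × ℕ × E × ℕ) : ℕ ×ₗ (ℕ ×ₗ (ℕ ×ₗ (E ×ₗ ℕ))) :=
  toLex (a.1, toLex (a.2.1, toLex (a.2.2.1, toLex (a.2.2.2.1, a.2.2.2.2))))

theorem rlt_iff (a b : ℕ × ℕ × ℕ × E × ℕ) : Rlt a b ↔ key5 a < key5 b := by
  simp [Rlt, key5, Prod.Lex.lt_iff]

theorem key5_inj : Function.Injective (key5 (E := E)) := by
  rintro ⟨a1, a2, a3, a4, a5⟩ ⟨b1, b2, b3, b4, b5⟩ h
  simp only [key5, toLex_inj, Prod.mk.injEq] at h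
  obtain ⟨h1, h2, h3, h4, h5⟩ := h
  simp_all

theorem rlt_irrefl (a : ℕ × ℕ × ℕ × E × ℕ) : ¬ Rlt a a := by
  rw [rlt_iff]; exact lt_irrefl _

theorem rlt_trans {a b c : ℕ × ℕ × ℕ × E × ℕ} (h₁ : Rlt a b) (h₂ : Rlt b c) :
    Rlt a c := by
  rw [rlt_iff] at *; exact lt_trans h₁ h₂

theorem rlt_trichotomy (a b : ℕ × ℕ × ℕ × E × ℕ) : Rlt a b ∨ a = b ∨ Rlt b a := by
  rcases lt_trichotomy (key5 a) (key5 b) with h | h | h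
  · exact Or.inl ((rlt_iff a b).mpr h)
  · exact Or.inr (Or.inl (key5_inj h))
  · exact Or.inr (Or.inr ((rlt_iff b a).mpr h))

mutual
theorem prec_irrefl : (t : RTree E) → ¬ Prec t t
  | node _ _ c, Prec.base h => rlt_irrefl _ h
  | node _ _ c, Prec.ofChildren _ h => precList_irrefl c h
termination_by t => sizeOf t

theorem precList_irrefl : (l : List (RTree E)) → ¬ PrecList l l
  | a :: l, PrecList.head h => prec_irrefl a h
  | a :: l, PrecList.tail h => precList_irrefl l h
termination_by l => sizeOf l
end

mutual
theorem prec_trans : (t₁ t₂ t₃ : RTree E) → Prec t₁ t₂ → Prec t₂ t₃ → Prec t₁ t₃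
  | _, _, _, Prec.base h₁, Prec.base h₂ => Prec.base (rlt_trans h₁ h₂)
  | _, _, _, Prec.base h₁, Prec.ofChildren e₂ _ => Prec.base (e₂ ▸ h₁)
  | _, _, _, Prec.ofChildren e₁ _, Prec.base h₂ => Prec.base (e₁ ▸ h₂)
  | node _ _ c₁, node _ _ c₂, node _ _ c₃, Prec.ofChildren e₁ h₁, Prec.ofChildren e₂ h₂ =>
      Prec.ofChildren (e₁.trans e₂) (precList_trans c₁ c₂ c₃ h₁ h₂)
termination_by t₁ t₂ t₃ _ _ => sizeOf t₁ + sizeOf t₂ + sizeOf t₃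

theorem precList_trans : (l₁ l₂ l₃ : List (RTree E)) →
    PrecList l₁ l₂ → PrecList l₂ l₃ → PrecList l₁ l₃
  | _ :: _, _ :: _, _ :: _, PrecList.head h₁, PrecList.head h₂ =>
      PrecList.head (prec_trans _ _ _ h₁ h₂)
  | _ :: _, _ :: _, _ :: _, PrecList.head h₁, PrecList.tail _ =>
      PrecList.head h₁
  | _ :: _, _ :: _, _ :: _, PrecList.tail _, PrecList.head h₂ =>
      PrecList.head h₂
  | _ :: l₁, _ :: l₂, _ :: l₃, PrecList.tail h₁, PrecList.tail h₂ =>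
      PrecList.tail (precList_trans l₁ l₂ l₃ h₁ h₂)
termination_by l₁ l₂ l₃ _ _ => sizeOf l₁ + sizeOf l₂ + sizeOf l₃
end

theorem prec_asymm {t₁ t₂ : RTree E} (h : Prec t₁ t₂) : ¬ Prec t₂ t₁ :=
  fun h' => prec_irrefl t₁ (prec_trans _ _ _ h h')

theorem r_node (l : E) (i : ℕ) (c : List (RTree E)) :
    R (node l i c) = ((node l i c).depth, (node l i c).size, c.length, l, i) := rfl

mutual
theorem prec_trichotomy : (t₁ t₂ : RTree E) → Prec t₁ t₂ ∨ t₁ = t₂ ∨ Prec t₂ t₁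
  | node l₁ i₁ c₁, node l₂ i₂ c₂ => by
    rcases rlt_trichotomy (R (node l₁ i₁ c₁)) (R (node l₂ i₂ c₂)) with h | h | h
    · exact Or.inl (Prec.base h)
    · have hc : c₁.length = c₂.length := by
        have := congrArg (fun x => x.2.2.1) h; simpa [R, children] using this
      rcases precList_trichotomy c₁ c₂ hc with h' | h' | h'
      · exact Or.inl (Prec.ofChildren h h')
      · have hl : l₁ = l₂ := by
          have := congrArg (fun x => x.2.2.2.1) h; simpa [R, elemLabel] using this
        have hi : i₁ = i₂ := by
          have := congrArg (fun x => x.2.2.2.2) h; simpa [R, inBond] using this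
        exact Or.inr (Or.inl (by rw [hl, hi, h']))
      · exact Or.inr (Or.inr (Prec.ofChildren h.symm h'))
    · exact Or.inr (Or.inr (Prec.base h))
termination_by t₁ t₂ => sizeOf t₁ + sizeOf t₂
decreasing_by all_goals (simp; omega)

theorem precList_trichotomy : (l₁ l₂ : List (RTree E)) → l₁.length = l₂.length →
    PrecList l₁ l₂ ∨ l₁ = l₂ ∨ PrecList l₂ l₁
  | [], [], _ => Or.inr (Or.inl rfl)
  | a :: l₁, b :: l₂, h => by
    rcases prec_trichotomy a b with h' | h' | h'
    · exact Or.inl (PrecList.head h')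
    · subst h'
      rcases precList_trichotomy l₁ l₂ (by simpa using h) with h'' | h'' | h''
      · exact Or.inl (PrecList.tail h'')
      · exact Or.inr (Or.inl (by rw [h'']))
      · exact Or.inr (Or.inr (PrecList.tail h''))
    · exact Or.inr (Or.inr (PrecList.head h'))
termination_by l₁ l₂ _ => sizeOf l₁ + sizeOf l₂
decreasing_by all_goals (simp; omega)
end

end RTree
/-! ### Unique paths in trees and the prefix order -/

section TreePath

open SimpleGraph

variable {V : Type} [DecidableEq V] {T : SimpleGraph V}

/-- The unique path between two vertices of a tree. -/
noncomputable def tpath (hT : T.IsTree) (u v : V) : T.Walk u v :=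
  (hT.existsUnique_path u v).choose

theorem tpath_isPath (hT : T.IsTree) (u v : V) : (tpath hT u v).IsPath :=
  (hT.existsUnique_path u v).choose_spec.1

theorem tpath_eq (hT : T.IsTree) {u v : V} (q : T.Walk u v) (hq : q.IsPath) :
    q = tpath hT u v :=
  (hT.existsUnique_path u v).choose_spec.2 q hq

/-- The support of the unique path from the root `r` to `v`. -/
noncomputable def tkey (hT : T.IsTree) (r v : V) : List V := (tpath hT r v).support

theorem tkey_ne_nil (hT : T.IsTree) (r v : V) : tkey hT r v ≠ [] :=
  SimpleGraph.Walk.support_ne_nil _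

theorem tkey_getLast (hT : T.IsTree) (r v : V) :
    (tkey hT r v).getLast (tkey_ne_nil hT r v) = v :=
  SimpleGraph.Walk.getLast_support _

theorem tkey_getLast? (hT : T.IsTree) (r v : V) :
    (tkey hT r v).getLast? = some v := by
  rw [List.getLast?_eq_getLast (tkey_ne_nil hT r v), tkey_getLast]

theorem tkey_nodup (hT : T.IsTree) (r v : V) : (tkey hT r v).Nodup :=
  (tpath_isPath hT r v).support_nodup

theorem self_mem_tkey (hT : T.IsTree) (r v : V) : v ∈ tkey hT r v :=
  SimpleGraph.Walk.end_mem_support _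

theorem tkey_inj (hT : T.IsTree) {r v u : V} (h : tkey hT r v = tkey hT r u) :
    v = u := by
  have hv := tkey_getLast? hT r v
  have hu := tkey_getLast? hT r u
  rw [h, hu] at hv
  exact (Option.some_inj.mp hv).symm

theorem tkey_root (hT : T.IsTree) (r : V) : tkey hT r r = [r] := by
  have : (SimpleGraph.Walk.nil : T.Walk r r) = tpath hT r r :=
    tpath_eq hT _ SimpleGraph.Walk.IsPath.nil
  simp [tkey, ← this]

theorem mem_tpath_iff (hT : T.IsTree) (r v u : V) :
    v ∈ tkey hT r u ↔ tkey hT r v <+: tkey hT r u := by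
  constructor
  · intro h
    have hQ : ((tpath hT r u).takeUntil v h).IsPath :=
      (tpath_isPath hT r u).takeUntil h
    have heq : (tpath hT r u).takeUntil v h = tpath hT r v := tpath_eq hT _ hQ
    have hspec := SimpleGraph.Walk.take_spec (tpath hT r u) h
    refine ⟨((tpath hT r u).dropUntil v h).support.tail, ?_⟩
    rw [tkey, ← heq]
    conv_rhs => rw [tkey, ← hspec]
    exact (SimpleGraph.Walk.support_append _ _).symm
  · intro h
    exact h.subset (self_mem_tkey hT r v)

/-- `Descend`-style characterization: every walk from `r` to `u` passes through `v`
iff the key of `v` is a prefix of the key of `u`. -/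
theorem walks_through_iff (hT : T.IsTree) (r v u : V) :
    (∀ p : T.Walk r u, v ∈ p.support) ↔ tkey hT r v <+: tkey hT r u := by
  rw [← mem_tpath_iff hT r v u]
  constructor
  · intro h; exact h _
  · intro h p
    have hb : p.bypass = tpath hT r u := tpath_eq hT _ p.bypass_isPath
    exact p.support_bypass_subset (by rw [hb]; exact h)

theorem tkey_concat (hT : T.IsTree) {r v c : V} (hadj : T.Adj v c)
    (hc : c ∉ tkey hT r v) : tkey hT r c = tkey hT r v ++ [c] := by
  have hP : ((tpath hT r v).concat hadj).IsPath := by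
    rw [SimpleGraph.Walk.isPath_def, SimpleGraph.Walk.support_concat,
      List.nodup_append]
    exact ⟨tkey_nodup hT r v, List.nodup_singleton c,
      by intro x hx y hy; rw [List.mem_singleton] at hy; subst hy; rintro rfl; exact hc hx⟩
  have := tpath_eq hT _ hP
  rw [tkey, ← this, SimpleGraph.Walk.support_concat]
  rfl

/-- Any neighbour of `v` is an ancestor or a descendant of `v`. -/
theorem tkey_adj_dichotomy (hT : T.IsTree) {v c : V} (r : V) (hadj : T.Adj v c) :
    tkey hT r c <+: tkey hT r v ∨ tkey hT r v <+: tkey hT r c := by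
  by_cases h : c ∈ tkey hT r v
  · exact Or.inl ((mem_tpath_iff hT r c v).mp h)
  · right
    rw [tkey_concat hT hadj h]
    exact ⟨[c], rfl⟩

/-- A neighbour of `v` below `v` is a child: its key extends that of `v` by one. -/
theorem tkey_child (hT : T.IsTree) {r v c : V} (hadj : T.Adj v c)
    (h : tkey hT r v <+: tkey hT r c) : tkey hT r c = tkey hT r v ++ [c] := by
  have hc : c ∉ tkey hT r v := by
    intro hmem
    have h2 : tkey hT r c <+: tkey hT r v := (mem_tpath_iff hT r c v).mp hmem
    have : tkey hT r c = tkey hT r v :=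
      h2.eq_of_length (le_antisymm h2.length_le h.length_le)
    exact hadj.ne' (tkey_inj hT this)
  exact tkey_concat hT hadj hc

/-- The step lemma: if `v` is a strict ancestor of `u`, there is a child `x` of `v`
which is an ancestor of `u`. -/
theorem tkey_step (hT : T.IsTree) {r v u : V} (h : tkey hT r v <+: tkey hT r u)
    (hne : v ≠ u) :
    ∃ x, T.Adj v x ∧ tkey hT r x = tkey hT r v ++ [x] ∧ tkey hT r x <+: tkey hT r u := by
  obtain ⟨t, ht⟩ := h
  have htne : t ≠ [] := by
    rintro rfl
    exact hne (tkey_inj hT (by rw [← ht, List.append_nil]))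
  have hchain : List.IsChain T.Adj (tkey hT r u) :=
    SimpleGraph.Walk.isChain_adj_support _
  rw [← ht, List.isChain_append] at hchain
  have hadj : T.Adj v (t.head htne) := by
    refine hchain.2.2 v ?_ _ ?_
    · rw [Option.mem_def, tkey_getLast? hT r v]
    · rw [Option.mem_def, List.head?_eq_head]
  refine ⟨t.head htne, hadj, ?_, ?_⟩
  · apply tkey_concat hT hadj
    have hnd := tkey_nodup hT r u
    rw [← ht, List.nodup_append] at hnd
    exact fun hx => hnd.2.2 _ hx _ (List.head_mem htne) rfl
  · have hx : t.head htne ∈ tkey hT r u := by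
      rw [← ht]; exact List.mem_append_right _ (List.head_mem htne)
    exact (mem_tpath_iff hT r (t.head htne) u).mp hx

end TreePath
/-! ### List and lex helper lemmas -/

section ListHelpers

variable {α : Type} [LinearOrder α]

theorem prefix_le : ∀ {l₁ l₂ : List α}, l₁ <+: l₂ → l₁ ≤ l₂ := by
  rintro l₁ l₂ ⟨t, rfl⟩
  induction l₁ with
  | nil =>
    cases t with
    | nil => exact le_rfl
    | cons b t => exact le_of_lt (List.Lex.nil : List.Lex (· < ·) [] (b :: t))
  | cons a l ih => exact List.cons_le_cons a ih

theorem lex_interval : ∀ (p y z : List α), p ≤ y → y ≤ z → p <+: z → p <+: y := by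
  intro p
  induction p with
  | nil => intro y z _ _ _; exact List.nil_prefix
  | cons a p ih =>
    intro y z h1 h2 h3
    rcases eq_or_lt_of_le h1 with rfl | h1
    · exact List.prefix_refl _
    obtain ⟨t, ht⟩ := h3
    replace h1 : List.Lex (· < ·) (a :: p) y := h1
    cases h1 with
    | @rel _ _ b y' hab =>
      exfalso
      rcases eq_or_lt_of_le h2 with rfl | h2
      · rw [List.cons_append] at ht
        cases ht; exact absurd hab (lt_irrefl a)
      · replace h2 : List.Lex (· < ·) (b :: y') z := h2
        rw [← ht, List.cons_append] at h2
        cases h2 with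
        | rel h => exact absurd (hab.trans h) (lt_irrefl a)
        | cons h => exact absurd hab (lt_irrefl a)
    | @cons _ _ y' hpy =>
      have hy' : p ≤ y' := le_of_lt (show p < y' from hpy)
      have hz : y' ≤ p ++ t := by
        rcases eq_or_lt_of_le h2 with heq | h2
        · rw [← ht] at heq
          cases heq
          exact le_rfl
        · replace h2 : List.Lex (· < ·) (a :: y') z := h2
          rw [← ht, List.cons_append] at h2
          cases h2 with
          | rel h => exact absurd h (lt_irrefl a)
          | cons h => exact le_of_lt (show y' < p ++ t from h)
      exact List.cons_prefix_cons.mpr ⟨rfl, ih y' (p ++ t) hy' hz ⟨t, rfl⟩⟩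

theorem sorted_flatten : ∀ {L : List (List α)},
    (∀ l ∈ L, l.Pairwise (· ≤ ·)) →
    L.Pairwise (fun l l' => ∀ x ∈ l, ∀ y ∈ l', x ≤ y) →
    L.flatten.Pairwise (· ≤ ·) := by
  intro L
  induction L with
  | nil => intro _ _; exact List.Pairwise.nil
  | cons l L ih =>
    intro h1 h2
    rw [List.pairwise_cons] at h2
    rw [List.flatten_cons, List.pairwise_append]
    refine ⟨h1 l (List.mem_cons_self), ih (fun l' hl' => h1 l' (List.mem_cons_of_mem _ hl')) h2.2, ?_⟩
    intro x hx y hy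
    obtain ⟨l', hl', hy⟩ := List.mem_flatten.mp hy
    exact h2.1 l' hl' x hx y hy

theorem sorted_range' : ∀ (n s : ℕ), (List.range' s n).Pairwise (· ≤ ·) := by
  intro n
  induction n with
  | zero => intro s; exact List.Pairwise.nil
  | succ n ih =>
    intro s
    rw [List.range'_succ, List.pairwise_cons]
    refine ⟨fun b hb => ?_, ih (s + 1)⟩
    obtain ⟨i, _, rfl⟩ := List.mem_range'.mp hb
    omega

theorem prefix_eq_of_getLast? {L P Q : List α} (hL : L.Nodup) (hP : P <+: L)
    (hQ : Q <+: L) (h : P.getLast? = Q.getLast?) (hPne : P ≠ []) : P = Q := by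
  have hQne : Q ≠ [] := by
    rintro rfl
    rw [List.getLast?_eq_getLast hPne] at h
    simp at h
  -- wlog via length comparison
  rcases le_total P.length Q.length with hle | hle
  · have hpq : P <+: Q := List.prefix_of_prefix_length_le hP hQ hle
    obtain ⟨t, rfl⟩ := hpq
    rcases List.eq_nil_or_concat t with rfl | ⟨t', x, rfl⟩
    · rw [List.append_nil]
    · exfalso
      simp only [List.concat_eq_append] at *
      have hx : (P ++ (t' ++ [x])).getLast? = some x := by
        rw [List.getLast?_eq_getLast (by simp), List.getLast_append]
        simp
      rw [← h, List.getLast?_eq_getLast hPne] at hx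
      have hmem : P.getLast hPne ∈ P := List.getLast_mem _
      have hQnd : (P ++ (t' ++ [x])).Nodup := hQ.sublist.nodup hL
      rw [List.nodup_append] at hQnd
      exact hQnd.2.2 _ hmem _ (by simp [← Option.some_inj.mp hx]) rfl
  · have hpq : Q <+: P := List.prefix_of_prefix_length_le hQ hP hle
    obtain ⟨t, rfl⟩ := hpq
    rcases List.eq_nil_or_concat t with rfl | ⟨t', x, rfl⟩
    · rw [List.append_nil]
    · exfalso
      simp only [List.concat_eq_append] at *
      have hx : (Q ++ (t' ++ [x])).getLast? = some x := by
        rw [List.getLast?_eq_getLast (by simp), List.getLast_append]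
        simp
      rw [h, List.getLast?_eq_getLast hQne] at hx
      have hmem : Q.getLast hQne ∈ Q := List.getLast_mem _
      have hQnd : (Q ++ (t' ++ [x])).Nodup := hP.sublist.nodup hL
      rw [List.nodup_append] at hQnd
      exact hQnd.2.2 _ hmem _ (by simp [← Option.some_inj.mp hx]) rfl

end ListHelpers
/-! ### Structure of DFS-numbered molecular trees -/

namespace MolGraph

variable {El : Type} (C : MolGraph El) (hC : C.IsMolTree)

/-- The key of a vertex: the support of the unique path from the root. -/
noncomputable def mkey (v : Fin C.k) : List (Fin C.k) := tkey hC.1 C.root v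

theorem descend_iff_prefix (v u : Fin C.k) :
    C.Descend v u ↔ mkey C hC v <+: mkey C hC u :=
  walks_through_iff hC.1 C.root v u

theorem anc_le {v u : Fin C.k} (h : mkey C hC v <+: mkey C hC u) : v ≤ u :=
  hC.2.1 v u ((descend_iff_prefix C hC v u).mpr h)

theorem mkey_inj {v u : Fin C.k} (h : mkey C hC v = mkey C hC u) : v = u :=
  tkey_inj hC.1 h

theorem anc_lt {v u : Fin C.k} (h : mkey C hC v <+: mkey C hC u) (hne : v ≠ u) :
    v < u :=
  lt_of_le_of_ne (anc_le C hC h) hne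

theorem mem_childrenList {v c : Fin C.k} :
    c ∈ C.childrenList v ↔ C.toSimple.Adj v c ∧ v < c := by
  rw [childrenList, Finset.mem_sort, Finset.mem_filter]
  simp

theorem child_mkey {v c : Fin C.k} (hadj : C.toSimple.Adj v c) (hlt : v < c) :
    mkey C hC c = mkey C hC v ++ [c] := by
  rcases tkey_adj_dichotomy hC.1 C.root hadj with h | h
  · exact absurd (anc_le C hC h) (not_le.mpr hlt)
  · exact tkey_child hC.1 hadj h

theorem child_mkey_prefix {v c : Fin C.k} (hc : c ∈ C.childrenList v) :
    mkey C hC v <+: mkey C hC c := by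
  obtain ⟨hadj, hlt⟩ := (mem_childrenList C).mp hc
  rw [child_mkey C hC hadj hlt]
  exact ⟨[c], rfl⟩

/-- The subtree of `v` as a finite set of vertices. -/
noncomputable def Sfin (v : Fin C.k) : Finset (Fin C.k) :=
  Finset.univ.filter (fun u => mkey C hC v <+: mkey C hC u)

theorem mem_Sfin {v u : Fin C.k} : u ∈ Sfin C hC v ↔ mkey C hC v <+: mkey C hC u := by
  rw [Sfin, Finset.mem_filter]
  simp

theorem self_mem_Sfin (v : Fin C.k) : v ∈ Sfin C hC v :=
  (mem_Sfin C hC).mpr (List.prefix_refl _)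

/-- The largest vertex of the subtree of `v`. -/
noncomputable def maxS (v : Fin C.k) : Fin C.k :=
  (Sfin C hC v).max' ⟨v, self_mem_Sfin C hC v⟩

theorem le_maxS {v u : Fin C.k} (h : u ∈ Sfin C hC v) : u ≤ maxS C hC v :=
  Finset.le_max' _ u h

theorem Sfin_eq_Icc (v : Fin C.k) : Sfin C hC v = Finset.Icc v (maxS C hC v) := by
  ext u
  rw [Finset.mem_Icc]
  constructor
  · intro h
    exact ⟨anc_le C hC ((mem_Sfin C hC).mp h), le_maxS C hC h⟩
  · rintro ⟨h1, h2⟩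
    have hd : C.Descend v (maxS C hC v) :=
      (descend_iff_prefix C hC _ _).mpr
        ((mem_Sfin C hC).mp ((Sfin C hC v).max'_mem ⟨v, self_mem_Sfin C hC v⟩))
    exact (mem_Sfin C hC).mpr ((descend_iff_prefix C hC _ _).mp (hC.2.2 v _ u hd h1 h2))

theorem subtree_step {v u : Fin C.k} (h : u ∈ Sfin C hC v) (hne : u ≠ v) :
    ∃ c ∈ C.childrenList v, u ∈ Sfin C hC c := by
  obtain ⟨x, hadj, hx, hpre⟩ := tkey_step hC.1 ((mem_Sfin C hC).mp h) (Ne.symm hne)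
  have hvx : v ≠ x := by
    intro heq
    subst heq
    have := congrArg List.length hx
    simp at this
  have hlt : v < x := anc_lt C hC (by
    show tkey hC.1 C.root v <+: tkey hC.1 C.root x
    rw [hx]; exact ⟨[x], rfl⟩) hvx
  exact ⟨x, (mem_childrenList C).mpr ⟨hadj, hlt⟩, (mem_Sfin C hC).mpr hpre⟩

theorem child_Sfin_subset {v c : Fin C.k} (hc : c ∈ C.childrenList v) :
    Sfin C hC c ⊆ Sfin C hC v := by
  intro u hu
  exact (mem_Sfin C hC).mpr ((child_mkey_prefix C hC hc).trans ((mem_Sfin C hC).mp hu))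

theorem not_mem_child_Sfin {v c : Fin C.k} (hc : c ∈ C.childrenList v) :
    v ∉ Sfin C hC c := by
  intro hv
  obtain ⟨_, hlt⟩ := (mem_childrenList C).mp hc
  exact absurd (anc_le C hC ((mem_Sfin C hC).mp hv)) (not_le.mpr hlt)

theorem child_Sfin_disjoint {v c c' : Fin C.k} (hc : c ∈ C.childrenList v)
    (hc' : c' ∈ C.childrenList v) (hne : c ≠ c') :
    Disjoint (Sfin C hC c) (Sfin C hC c') := by
  rw [Finset.disjoint_left]
  intro u hu hu'
  apply hne
  obtain ⟨hadj, hlt⟩ := (mem_childrenList C).mp hc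
  obtain ⟨hadj', hlt'⟩ := (mem_childrenList C).mp hc'
  have h1 := (mem_Sfin C hC).mp hu
  have h2 := (mem_Sfin C hC).mp hu'
  have hlen : (mkey C hC c).length = (mkey C hC c').length := by
    simp [child_mkey C hC hadj hlt, child_mkey C hC hadj' hlt']
  have := List.prefix_of_prefix_length_le h1 h2 (le_of_eq hlen)
  exact mkey_inj C hC (this.eq_of_length hlen)

theorem child_Sfin_lt {v c c' : Fin C.k} (hc : c ∈ C.childrenList v)
    (hc' : c' ∈ C.childrenList v) (hlt : c < c') :
    ∀ x ∈ Sfin C hC c, ∀ y ∈ Sfin C hC c', x < y := by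
  have hmax : maxS C hC c < c' := by
    by_contra hcon
    push_neg at hcon
    have : c' ∈ Sfin C hC c := by
      rw [Sfin_eq_Icc]
      exact Finset.mem_Icc.mpr ⟨le_of_lt hlt, hcon⟩
    exact (Finset.disjoint_left.mp
      (child_Sfin_disjoint C hC hc hc' (ne_of_lt hlt))) this (self_mem_Sfin C hC c')
  intro x hx y hy
  calc x ≤ maxS C hC c := le_maxS C hC hx
    _ < c' := hmax
    _ ≤ y := anc_le C hC ((mem_Sfin C hC).mp hy)

/-- The vertices of the subtree of `v`, in increasing order. -/
noncomputable def blockL (v : Fin C.k) : List (Fin C.k) :=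
  (Sfin C hC v).sort (· ≤ ·)

theorem mem_blockL {v u : Fin C.k} : u ∈ blockL C hC v ↔ u ∈ Sfin C hC v :=
  Finset.mem_sort _

theorem children_pairwise_lt (v : Fin C.k) : (C.childrenList v).Pairwise (· < ·) :=
  (Finset.sortedLT_sort _).pairwise

/-- The fundamental decomposition: the block of `v` consists of `v` followed by the
blocks of the children of `v` in order. -/
theorem blockL_seq (v : Fin C.k) :
    blockL C hC v = v :: ((C.childrenList v).map (blockL C hC)).flatten := by
  have hchild : ∀ c ∈ C.childrenList v, c ∈ C.childrenList v := fun c h => h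
  -- nodup of RHS
  have hnd : (v :: ((C.childrenList v).map (blockL C hC)).flatten).Nodup := by
    rw [List.nodup_cons, List.nodup_flatten]
    refine ⟨?_, fun l hl => ?_, ?_⟩
    · intro hv
      obtain ⟨l, hl, hvl⟩ := List.mem_flatten.mp hv
      obtain ⟨c, hc, rfl⟩ := List.mem_map.mp hl
      exact not_mem_child_Sfin C hC hc ((mem_blockL C hC).mp hvl)
    · obtain ⟨c, hc, rfl⟩ := List.mem_map.mp hl
      exact Finset.sort_nodup _ _
    · rw [List.pairwise_map]
      refine (children_pairwise_lt C v).imp_of_mem ?_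
      intro c c' hc hc' hlt
      intro x hx hx'
      exact absurd rfl (ne_of_lt (child_Sfin_lt C hC hc hc' hlt x
        ((mem_blockL C hC).mp hx) x ((mem_blockL C hC).mp hx')))
  -- same elements
  have hfs : (blockL C hC v).toFinset =
      (v :: ((C.childrenList v).map (blockL C hC)).flatten).toFinset := by
    ext u
    rw [List.mem_toFinset, List.mem_toFinset, mem_blockL, List.mem_cons, List.mem_flatten]
    constructor
    · intro hu
      by_cases hne : u = v
      · exact Or.inl hne
      · obtain ⟨c, hc, hu'⟩ := subtree_step C hC hu hne
        exact Or.inr ⟨blockL C hC c, List.mem_map.mpr ⟨c, hc, rfl⟩,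
          (mem_blockL C hC).mpr hu'⟩
    · rintro (rfl | ⟨l, hl, hul⟩)
      · exact self_mem_Sfin C hC u
      · obtain ⟨c, hc, rfl⟩ := List.mem_map.mp hl
        exact child_Sfin_subset C hC hc ((mem_blockL C hC).mp hul)
  -- sortedness of RHS
  have hsorted : (v :: ((C.childrenList v).map (blockL C hC)).flatten).Pairwise (· ≤ ·) := by
    rw [List.pairwise_cons]
    constructor
    · intro b hb
      obtain ⟨l, hl, hbl⟩ := List.mem_flatten.mp hb
      obtain ⟨c, hc, rfl⟩ := List.mem_map.mp hl
      have := child_Sfin_subset C hC hc ((mem_blockL C hC).mp hbl)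
      exact anc_le C hC ((mem_Sfin C hC).mp this)
    · refine sorted_flatten ?_ ?_
      · intro l hl
        obtain ⟨c, hc, rfl⟩ := List.mem_map.mp hl
        exact Finset.pairwise_sort _ _
      · rw [List.pairwise_map]
        refine (children_pairwise_lt C v).imp_of_mem ?_
        intro c c' hc hc' hlt x hx y hy
        exact le_of_lt (child_Sfin_lt C hC hc hc' hlt x ((mem_blockL C hC).mp hx) y
          ((mem_blockL C hC).mp hy))
  exact List.Perm.eq_of_pairwise' (Finset.pairwise_sort _ _) hsorted
    (List.perm_of_nodup_nodup_toFinset_eq (Finset.sort_nodup _ _) hnd hfs)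

theorem blockL_length (v : Fin C.k) : (blockL C hC v).length = (Sfin C hC v).card :=
  Finset.length_sort _

theorem val_le_of_mem_Sfin {v u : Fin C.k} (h : u ∈ Sfin C hC v) : v ≤ u :=
  anc_le C hC ((mem_Sfin C hC).mp h)

/-- The block of `v` is the consecutive interval of vertices starting at `v`. -/
theorem blockL_val (v : Fin C.k) :
    (blockL C hC v).map Fin.val = List.range' v.val (Sfin C hC v).card := by
  have hvmax : v ≤ maxS C hC v := val_le_of_mem_Sfin C hC
    ((Sfin C hC v).max'_mem ⟨v, self_mem_Sfin C hC v⟩)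
  have hcard : (Sfin C hC v).card = (maxS C hC v).val + 1 - v.val := by
    rw [Sfin_eq_Icc, Fin.card_Icc]
  refine (fun hp h1 h2 => List.Perm.eq_of_pairwise' (r := (· ≤ ·)) h1 h2 hp) ?_ ?_ ?_
  · apply List.perm_of_nodup_nodup_toFinset_eq
    · exact (Finset.sort_nodup _ _).map Fin.val_injective
    · exact List.nodup_range'
    · ext x
      rw [List.mem_toFinset, List.mem_toFinset, List.mem_map, List.mem_range']
      constructor
      · rintro ⟨u, hu, rfl⟩
        rw [mem_blockL, Sfin_eq_Icc, Finset.mem_Icc] at hu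
        have h1 : v.val ≤ u.val := hu.1
        have h2 : u.val ≤ (maxS C hC v).val := hu.2
        refine ⟨u.val - v.val, by omega, by omega⟩
      · rintro ⟨i, hi, rfl⟩
        have hlt : v.val + i < C.k := by
          have : (maxS C hC v).val < C.k := (maxS C hC v).isLt
          omega
        have hvmax' : v.val ≤ (maxS C hC v).val := hvmax
        refine ⟨⟨v.val + i, hlt⟩, ?_, by simp⟩
        rw [mem_blockL, Sfin_eq_Icc, Finset.mem_Icc]
        constructor
        · exact Fin.le_def.mpr (by simp)
        · exact Fin.le_def.mpr (by simp only [Fin.val_mk]; omega)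
  · exact List.Pairwise.map _ (fun a b h => (Fin.le_def.mp h : a.val ≤ b.val))
      (Finset.pairwise_sort _ _)
  · exact sorted_range' _ _

end MolGraph
namespace MolGraph

variable {El : Type} (C : MolGraph El) (hC : C.IsMolTree)

theorem root_le (v : Fin C.k) : C.root ≤ v := by
  rw [Fin.le_def]
  exact Nat.zero_le _

theorem mkey_root (_ : C.IsMolTree) : mkey C hC C.root = [C.root] := tkey_root hC.1 _

theorem mkey_root_prefix (v : Fin C.k) : mkey C hC C.root <+: mkey C hC v := by
  rw [mkey_root C hC hC]
  exact ⟨(tpath hC.1 C.root v).support.tail,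
    (SimpleGraph.Walk.support_eq_cons _).symm⟩

/-- The parent of a vertex (itself for the root). -/
noncomputable def parentF (v : Fin C.k) : Fin C.k :=
  ((mkey C hC v).dropLast).getLastD v

theorem parentF_root : parentF C hC C.root = C.root := by
  rw [parentF, mkey_root C hC hC]
  rfl

theorem mkey_getLast (v : Fin C.k) :
    (mkey C hC v).getLast (tkey_ne_nil hC.1 C.root v) = v := tkey_getLast hC.1 _ _

theorem parent_spec {v : Fin C.k} (hv : v ≠ C.root) :
    C.toSimple.Adj (parentF C hC v) v ∧ parentF C hC v < v ∧
      mkey C hC v = mkey C hC (parentF C hC v) ++ [v] := by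
  set L := mkey C hC v with hL
  have hLne : L ≠ [] := tkey_ne_nil hC.1 C.root v
  have hlast : L.getLast hLne = v := mkey_getLast C hC v
  have hsplit : L.dropLast ++ [v] = L := by
    conv_rhs => rw [← List.dropLast_append_getLast hLne, hlast]
  have hinit_ne : L.dropLast ≠ [] := by
    intro h
    rw [h, List.nil_append] at hsplit
    have hcons := SimpleGraph.Walk.support_eq_cons (tpath hC.1 C.root v)
    rw [show (tpath hC.1 C.root v).support = L from rfl, ← hsplit] at hcons
    exact hv (by simpa using congrArg List.head? hcons)
  set p := L.dropLast.getLast hinit_ne with hp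
  have hparent : parentF C hC v = p := by
    rw [parentF, ← hL, List.getLastD_eq_getLast?, List.getLast?_eq_getLast hinit_ne]
    rfl
  have hpmem : p ∈ L.dropLast := List.getLast_mem _
  have hinit_pre : L.dropLast <+: L := List.dropLast_prefix L
  have hpmemL : p ∈ L := hinit_pre.subset hpmem
  have hppre : mkey C hC p <+: L := (mem_tpath_iff hC.1 C.root p v).mp hpmemL
  have hnd : L.Nodup := tkey_nodup hC.1 C.root v
  have hpeq : mkey C hC p = L.dropLast := by
    refine prefix_eq_of_getLast? hnd hppre hinit_pre ?_ (tkey_ne_nil hC.1 C.root p)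
    rw [mkey, List.getLast?_eq_getLast (tkey_ne_nil hC.1 C.root p),
      List.getLast?_eq_getLast hinit_ne, tkey_getLast]
  have hvnotinit : v ∉ L.dropLast := by
    intro hmem
    have : L.Nodup := hnd
    rw [← hsplit, List.nodup_append] at this
    exact this.2.2 _ hmem _ (List.mem_singleton_self v) rfl
  have hpv : p ≠ v := fun h => hvnotinit (h ▸ hpmem)
  have hplt : p < v := anc_lt C hC (by rw [hpeq]; exact hinit_pre) hpv
  have hadj : C.toSimple.Adj p v := by
    have hchain : List.IsChain C.toSimple.Adj L :=
      SimpleGraph.Walk.isChain_adj_support _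
    rw [← hsplit, List.isChain_append] at hchain
    refine hchain.2.2 p ?_ v ?_
    · rw [Option.mem_def, List.getLast?_eq_getLast hinit_ne]
    · rw [Option.mem_def]; rfl
  rw [hparent]
  exact ⟨hadj, hplt, by rw [hpeq, hsplit]⟩

theorem parent_unique {v u : Fin C.k} (hadj : C.toSimple.Adj u v) (hlt : u < v) :
    parentF C hC v = u := by
  have hv : v ≠ C.root := by
    intro h
    exact absurd (h ▸ root_le C u : v ≤ u) (not_le.mpr hlt)
  obtain ⟨hadj', _, hsplit⟩ := parent_spec C hC hv
  have hpre : mkey C hC u <+: mkey C hC v := by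
    rcases tkey_adj_dichotomy hC.1 C.root hadj with h | h
    · exact absurd (anc_le C hC (show mkey C hC v <+: mkey C hC u from h))
        (not_le.mpr hlt)
    · exact h
  have hch : mkey C hC v = mkey C hC u ++ [v] := tkey_child hC.1 hadj hpre
  have heq : mkey C hC (parentF C hC v) ++ [v] = mkey C hC u ++ [v] := by
    rw [← hsplit, hch]
  have := List.append_inj heq (by
    have := congrArg List.length heq
    simpa using this)
  exact mkey_inj C hC this.1

theorem adj_iff_parent {a b : Fin C.k} (hab : a < b) :
    C.toSimple.Adj a b ↔ parentF C hC b = a := by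
  constructor
  · intro h
    exact parent_unique C hC h hab
  · rintro rfl
    have hb : b ≠ C.root := by
      intro h
      exact absurd (h ▸ root_le C (parentF C hC b) : b ≤ _) (not_le.mpr hab)
    exact (parent_spec C hC hb).1

theorem inBondNat_root : C.inBondNat C.root = 0 := by
  rw [inBondNat]
  rw [Finset.filter_eq_empty_iff.mpr ?_, Finset.sum_empty]
  intro w _
  rintro ⟨-, hlt⟩
  exact absurd (root_le C w) (not_le.mpr hlt)

theorem inBondNat_eq {v : Fin C.k} (hv : v ≠ C.root) :
    C.inBondNat v = C.bond s(v, parentF C hC v) := by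
  obtain ⟨hadj, hlt, _⟩ := parent_spec C hC hv
  rw [inBondNat]
  rw [show Finset.univ.filter (fun w => C.toSimple.Adj v w ∧ w < v)
      = {parentF C hC v} from ?_, Finset.sum_singleton]
  ext w
  rw [Finset.mem_filter, Finset.mem_singleton]
  constructor
  · rintro ⟨-, hw, hwv⟩
    exact (parent_unique C hC hw.symm hwv).symm
  · rintro rfl
    exact ⟨Finset.mem_univ _, hadj.symm, hlt⟩

theorem bond_eq_zero {a b : Fin C.k} (hne : a ≠ b) (hnadj : ¬ C.toSimple.Adj a b) :
    C.bond s(a, b) = 0 := by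
  have h : ¬(a ≠ b ∧ 0 < C.bond s(a, b)) := hnadj
  push_neg at h
  exact Nat.le_zero.mp (h hne)

end MolGraph
/-! ### Flattening rooted trees with positional parent information -/

namespace RTree

variable {E : Type}

mutual
/-- Flatten an `RTree` in preorder, recording for each node its label, incoming
bond, and the positional index of its parent; `n` is the index of the current
node and `p` the index of its parent. -/
def flatP : RTree E → ℕ → ℕ → List (E × ℕ × ℕ)
  | node l i cs, n, p => (l, i, p) :: flatPAux cs (n + 1) n

/-- Flatten a list of sibling subtrees, `n` being the index of the first one and
`p` the index of their common parent. -/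
def flatPAux : List (RTree E) → ℕ → ℕ → List (E × ℕ × ℕ)
  | [], _, _ => []
  | t :: ts, n, p => flatP t n p ++ flatPAux ts (n + t.size) p
end

theorem size_node (l : E) (i : ℕ) (c : List (RTree E)) :
    (node l i c).size = 1 + (c.map size).sum := by
  rw [size, List.attach_map_val]

mutual
theorem flatP_length : ∀ (t : RTree E) (n p : ℕ), (flatP t n p).length = t.size
  | node l i cs, n, p => by
    rw [flatP, size_node, List.length_cons, flatPAux_length cs (n + 1) n]
    omega

theorem flatPAux_length : ∀ (ts : List (RTree E)) (n p : ℕ),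
    (flatPAux ts n p).length = (ts.map size).sum
  | [], _, _ => rfl
  | t :: ts, n, p => by
    rw [flatPAux, List.length_append, flatP_length t n p,
      flatPAux_length ts (n + t.size) p, List.map_cons, List.sum_cons]
end

end RTree

namespace MolGraph

variable {El : Type} (C : MolGraph El) (hC : C.IsMolTree)

theorem toRTree_eq (v : Fin C.k) :
    C.toRTree v = RTree.node (C.label v) (C.inBondNat v)
      ((C.childrenList v).map C.toRTree) := by
  rw [toRTree]
  congr 1
  exact List.attach_map_val

/-- The data recorded at each vertex by the flattening. -/
noncomputable def flatF (u : Fin C.k) : El × ℕ × ℕ :=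
  (C.label u, C.inBondNat u, (parentF C hC u).val)

theorem flat_aux (v : Fin C.k) :
    ∀ (cs : List (Fin C.k)), (∀ c ∈ cs, c ∈ C.childrenList v) →
    (∀ c ∈ cs, RTree.flatP (C.toRTree c) c.val (parentF C hC c).val
        = (blockL C hC c).map (flatF C hC)) →
    ∀ n, ((cs.map (blockL C hC)).flatten.map Fin.val
        = List.range' n ((cs.map (blockL C hC)).flatten.length)) →
    RTree.flatPAux (cs.map C.toRTree) n v.val
      = ((cs.map (blockL C hC)).flatten).map (flatF C hC) := by
  intro cs
  induction cs with
  | nil => intro _ _ n _; rfl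
  | cons c cs ih =>
    intro hmem hIH n hconsec
    have hc : c ∈ C.childrenList v := hmem c (List.mem_cons_self)
    have hIHc := hIH c (List.mem_cons_self)
    simp only [List.map_cons, List.flatten_cons] at hconsec ⊢
    set B := blockL C hC c with hB
    set F := (cs.map (blockL C hC)).flatten with hF
    -- split the consecutive-range hypothesis
    have hlen : (B.map Fin.val).length = B.length := List.length_map _
    have hsplit : B.map Fin.val = List.range' n B.length ∧
        F.map Fin.val = List.range' (n + B.length) F.length := by
      have h1 : (B ++ F).map Fin.val = B.map Fin.val ++ F.map Fin.val :=
        List.map_append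
      rw [h1, List.length_append] at hconsec
      have h2 : List.range' n (B.length + F.length)
          = List.range' n B.length ++ List.range' (n + B.length) F.length := by
        have := List.range'_append (s := n) (m := B.length) (n := F.length) (step := 1)
        simpa [Nat.add_comm] using this.symm
      rw [h2] at hconsec
      have := List.append_inj hconsec (by simp)
      constructor
      · exact this.1
      · exact this.2
    -- the first child starts exactly at `n`
    have hcval : c.val = n := by
      have hcB : c ∈ B := (mem_blockL C hC).mpr (self_mem_Sfin C hC c)
      have hBne : B.length ≠ 0 := by
        intro h
        rw [List.length_eq_zero_iff] at h
        rw [h] at hcB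
        exact absurd hcB (List.not_mem_nil)
      have h1 : c.val ∈ List.range' n B.length := by
        rw [← hsplit.1]
        exact List.mem_map.mpr ⟨c, hcB, rfl⟩
      obtain ⟨i, _, hi⟩ := List.mem_range'.mp h1
      have h2 : n ∈ List.range' n B.length :=
        List.mem_range'.mpr ⟨0, by omega, by omega⟩
      rw [← hsplit.1] at h2
      obtain ⟨u, huB, hu⟩ := List.mem_map.mp h2
      have : c ≤ u := val_le_of_mem_Sfin C hC ((mem_blockL C hC).mp huB)
      have hcu : c.val ≤ u.val := this
      omega
    have hpar : parentF C hC c = v := by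
      obtain ⟨hadj, hlt⟩ := (mem_childrenList C).mp hc
      exact parent_unique C hC hadj hlt
    have hsize : (C.toRTree c).size = B.length := by
      have := congrArg List.length hIHc
      rw [RTree.flatP_length, List.length_map] at this
      exact this
    rw [RTree.flatPAux, List.map_append]
    congr 1
    · rw [← hcval, ← hpar]
      exact hIHc
    · rw [hsize]
      exact ih (fun x hx => hmem x (List.mem_cons_of_mem _ hx))
        (fun x hx => hIH x (List.mem_cons_of_mem _ hx)) (n + B.length) hsplit.2

theorem flat_main (v : Fin C.k) :
    RTree.flatP (C.toRTree v) v.val (parentF C hC v).val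
      = (blockL C hC v).map (flatF C hC) := by
  rw [toRTree_eq, RTree.flatP, blockL_seq C hC v, List.map_cons]
  congr 1
  have hcard : 0 < (Sfin C hC v).card :=
    Finset.card_pos.mpr ⟨v, self_mem_Sfin C hC v⟩
  have hval := blockL_val C hC v
  rw [blockL_seq C hC v, List.map_cons] at hval
  rw [show (Sfin C hC v).card = ((Sfin C hC v).card - 1) + 1 from by omega,
    List.range'_succ] at hval
  have htail : (((C.childrenList v).map (blockL C hC)).flatten).map Fin.val
      = List.range' (v.val + 1) ((Sfin C hC v).card - 1) := by
    injection hval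
  have hlen : (((C.childrenList v).map (blockL C hC)).flatten).length
      = (Sfin C hC v).card - 1 := by
    rw [← List.length_map Fin.val, htail, List.length_range']
  refine flat_aux C hC v (C.childrenList v) (fun c h => h) ?_ (v.val + 1) ?_
  · intro c hcmem
    have hlt : v < c := ((mem_childrenList C).mp hcmem).2
    exact flat_main c
  · rw [hlen]
    exact htail
termination_by C.k - v.val
decreasing_by
  have h1 : v.val < c.val := hlt
  have h2 : c.val < C.k := c.isLt
  omega

theorem Sfin_root : Sfin C hC C.root = Finset.univ := by
  ext u
  simp only [Finset.mem_univ, iff_true]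
  exact (mem_Sfin C hC).mpr (mkey_root_prefix C hC u)

theorem flat_root :
    RTree.flatP (C.toRTree C.root) 0 0
      = ((Finset.univ : Finset (Fin C.k)).sort (· ≤ ·)).map (flatF C hC) := by
  have h := flat_main C hC C.root
  rw [parentF_root] at h
  have hroot : (C.root : Fin C.k).val = 0 := rfl
  rw [hroot] at h
  rw [h, blockL, Sfin_root]

end MolGraph
namespace MolGraph

variable {El : Type}

theorem permute_eq_of_toRTree_eq (G : MolGraph El) (σ₁ σ₂ : Equiv.Perm (Fin G.k))
    (h₁ : (G.permute σ₁).IsMolTree) (h₂ : (G.permute σ₂).IsMolTree)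
    (h : (G.permute σ₁).toRTree (G.permute σ₁).root
       = (G.permute σ₂).toRTree (G.permute σ₂).root) :
    G.permute σ₁ = G.permute σ₂ := by
  have hflat : RTree.flatP ((G.permute σ₁).toRTree (G.permute σ₁).root) 0 0
      = RTree.flatP ((G.permute σ₂).toRTree (G.permute σ₂).root) 0 0 := by rw [h]
  rw [flat_root _ h₁, flat_root _ h₂] at hflat
  have hflat' : List.map (flatF (G.permute σ₁) h₁)
        ((Finset.univ : Finset (Fin G.k)).sort (· ≤ ·))
      = List.map (flatF (G.permute σ₂) h₂)
        ((Finset.univ : Finset (Fin G.k)).sort (· ≤ ·)) := hflat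
  have hpt : ∀ u : Fin G.k, flatF (G.permute σ₁) h₁ u = flatF (G.permute σ₂) h₂ u := by
    intro u
    exact List.map_eq_map_iff.mp hflat' u
      ((Finset.mem_sort (α := Fin G.k) _).mpr (Finset.mem_univ u))
  have hlabel : ∀ u : Fin G.k, (G.permute σ₁).label u = (G.permute σ₂).label u :=
    fun u => congrArg (fun x => x.1) (hpt u)
  have hin : ∀ u : Fin G.k, (G.permute σ₁).inBondNat u = (G.permute σ₂).inBondNat u :=
    fun u => congrArg (fun x => x.2.1) (hpt u)
  have hpar : ∀ u : Fin G.k,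
      parentF (G.permute σ₁) h₁ u = parentF (G.permute σ₂) h₂ u := by
    intro u
    have := congrArg (fun x => x.2.2) (hpt u)
    exact Fin.val_injective this
  have hbond2 : ∀ a b : Fin G.k, a < b →
      (G.permute σ₁).bond s(a, b) = (G.permute σ₂).bond s(a, b) := by
    intro a b hab
    by_cases hp : parentF (G.permute σ₁) h₁ b = a
    · have hp2 : parentF (G.permute σ₂) h₂ b = a := by rw [← hpar b]; exact hp
      have hb1 : b ≠ (G.permute σ₁).root := by
        intro hr
        exact absurd (hr ▸ root_le (G.permute σ₁) a : b ≤ a) (not_le.mpr hab)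
      have hb2 : b ≠ (G.permute σ₂).root := hb1
      have e1 := inBondNat_eq (G.permute σ₁) h₁ hb1
      have e2 := inBondNat_eq (G.permute σ₂) h₂ hb2
      rw [hp] at e1
      rw [hp2] at e2
      calc (G.permute σ₁).bond s(a, b)
          = (G.permute σ₁).bond s(b, a) := congrArg _ Sym2.eq_swap
        _ = (G.permute σ₁).inBondNat b := e1.symm
        _ = (G.permute σ₂).inBondNat b := hin b
        _ = (G.permute σ₂).bond s(b, a) := e2
        _ = (G.permute σ₂).bond s(a, b) := congrArg _ Sym2.eq_swap
    · have hp2 : ¬ parentF (G.permute σ₂) h₂ b = a := by rw [← hpar b]; exact hp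
      have hna1 : ¬ (G.permute σ₁).toSimple.Adj a b :=
        fun hadj => hp ((adj_iff_parent _ h₁ hab).mp hadj)
      have hna2 : ¬ (G.permute σ₂).toSimple.Adj a b :=
        fun hadj => hp2 ((adj_iff_parent _ h₂ hab).mp hadj)
      rw [bond_eq_zero (G.permute σ₁) (ne_of_lt hab) hna1, bond_eq_zero (G.permute σ₂) (ne_of_lt hab) hna2]
  have hbond : ∀ a b : Fin G.k,
      (G.permute σ₁).bond s(a, b) = (G.permute σ₂).bond s(a, b) := by
    intro a b
    rcases lt_trichotomy a b with hab | rfl | hab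
    · exact hbond2 a b hab
    · exact ((G.permute σ₁).bond_irrefl a).trans ((G.permute σ₂).bond_irrefl a).symm
    · exact (congrArg _ Sym2.eq_swap).trans ((hbond2 b a hab).trans (congrArg _ Sym2.eq_swap))
  have hbf : (G.permute σ₁).bond = (G.permute σ₂).bond := by
    funext e
    induction e using Sym2.ind with
    | _ a b => exact hbond a b
  have hlf : (G.permute σ₁).label = (G.permute σ₂).label := funext hlabel
  show MolGraph.mk G.k G.k_pos (G.permute σ₁).bond (G.permute σ₁).bond_irrefl
      (G.permute σ₁).label
    = MolGraph.mk G.k G.k_pos (G.permute σ₂).bond (G.permute σ₂).bond_irrefl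
      (G.permute σ₂).label
  exact (MolGraph.mk.injEq ..).mpr ⟨rfl, heq_of_eq hbf, heq_of_eq hlf⟩

end MolGraph
/-! ### Existence of a DFS renumbering rooted at a central vertex -/

section Existence

open SimpleGraph

/-- Every finite nonempty graph has a central vertex. -/
theorem exists_isCentral {V : Type} [Fintype V] [DecidableEq V] (G : SimpleGraph V)
    (hne : Nonempty V) : ∃ c, IsCentral G c := by
  classical
  haveI := hne
  set P : ℕ → Prop := fun n => ∃ (x y : V) (q : G.Walk x y), q.IsPath ∧
    q.support.length = n with hP
  obtain ⟨v⟩ := hne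
  have hP1 : P 1 := ⟨v, v, Walk.nil, Walk.IsPath.nil, rfl⟩
  have hbound : ∀ n, P n → n ≤ Fintype.card V := by
    rintro n ⟨x, y, q, hq, rfl⟩
    exact hq.support_nodup.length_le_card
  have hcard : 1 ≤ Fintype.card V := Fintype.card_pos
  obtain ⟨x, y, q, hq, hlen⟩ : P (Nat.findGreatest P (Fintype.card V)) :=
    Nat.findGreatest_spec hcard hP1
  have hlong : IsLongestPath G q := by
    refine ⟨hq, fun a b q' hq' => ?_⟩
    rw [hlen]
    exact Nat.le_findGreatest (hbound _ ⟨a, b, q', hq', rfl⟩) ⟨a, b, q', hq', rfl⟩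
  have hn1 : 1 ≤ q.support.length := by
    have := q.support_ne_nil
    cases hsup : q.support with
    | nil => exact absurd hsup this
    | cons _ _ => simp [hsup]
  refine ⟨q.support.get ⟨(q.support.length + 1) / 2 - 1, by omega⟩,
    x, y, q, hlong, (q.support.length + 1) / 2, Or.inr rfl, by omega, rfl⟩

namespace MolGraph

variable {El : Type}

/-- The graph isomorphism between the permuted graph and the original graph. -/
def permIso (G : MolGraph El) (σ : Equiv.Perm (Fin G.k)) :
    (G.permute σ).toSimple ≃g G.toSimple where
  toEquiv := σ
  map_rel_iff' := by
    intro a b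
    show ((σ a ≠ σ b) ∧ 0 < G.bond s(σ a, σ b)) ↔
      ((a ≠ b) ∧ 0 < G.bond (Sym2.map σ s(a, b)))
    rw [Sym2.map_pair_eq σ a b]
    constructor
    · rintro ⟨h1, h2⟩
      exact ⟨fun h => h1 (congrArg σ h), h2⟩
    · rintro ⟨h1, h2⟩
      exact ⟨fun h => h1 (σ.injective h), h2⟩

theorem permute_isTree (G : MolGraph El) (σ : Equiv.Perm (Fin G.k))
    (hT : G.toSimple.IsTree) : (G.permute σ).toSimple.IsTree := by
  constructor
  · exact (permIso G σ).connected_iff.mpr hT.1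
  · intro u p hp
    exact hT.2 (p.map (permIso G σ).toHom)
      (hp.map (f := (permIso G σ).toHom) σ.injective)

theorem descend_permute (G : MolGraph El) (σ : Equiv.Perm (Fin G.k)) (v u : Fin G.k) :
    (G.permute σ).Descend v u ↔
      ∀ q : G.toSimple.Walk (σ G.root) (σ u), σ v ∈ q.support := by
  constructor
  · intro hd q
    have hp := hd (((q.map (permIso G σ).symm.toHom).copy
      (σ.symm_apply_apply _) (σ.symm_apply_apply _)))
    replace hp := (congrArg (fun l => v ∈ l)
      ((SimpleGraph.Walk.support_copy (q.map (permIso G σ).symm.toHom) _ _).trans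
        (SimpleGraph.Walk.support_map (permIso G σ).symm.toHom q))).mp hp
    obtain ⟨x, hx, hxv⟩ := List.mem_map.mp hp
    have hxv' : σ.symm x = v := hxv
    have hx2 : x = σ v := by rw [← hxv', σ.apply_symm_apply]
    rwa [← hx2]
  · intro hq p
    have := hq (p.map (permIso G σ).toHom)
    replace this := (congrArg (fun l => σ v ∈ l)
      (SimpleGraph.Walk.support_map (permIso G σ).toHom p)).mp this
    obtain ⟨x, hx, hxv⟩ := List.mem_map.mp this
    have hxv' : σ x = σ v := hxv
    rwa [← σ.injective hxv']

theorem exists_good_perm (G : MolGraph El) (hG : G.IsMolTree) :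
    ∃ σ : Equiv.Perm (Fin G.k),
      (G.permute σ).IsMolTree ∧ IsCentral G.toSimple (σ G.root) := by
  classical
  obtain ⟨c, hc⟩ := exists_isCentral G.toSimple ⟨G.root⟩
  have hT := hG.1
  set key : Fin G.k → List (Fin G.k) := tkey hT c with hkey
  set r : Fin G.k → Fin G.k → Prop := fun a b => key a ≤ key b with hr
  haveI : DecidableRel r := fun a b => Classical.dec _
  haveI : IsTrans (Fin G.k) r := ⟨fun a b c' h1 h2 => le_trans h1 h2⟩
  haveI : IsAntisymm (Fin G.k) r := ⟨fun a b h1 h2 => tkey_inj hT (le_antisymm h1 h2)⟩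
  haveI : IsTotal (Fin G.k) r := ⟨fun a b => le_total _ _⟩
  set ks := Finset.univ.sort r with hks
  have hkslen : ks.length = G.k := by
    rw [hks, Finset.length_sort, Finset.card_univ, Fintype.card_fin]
  set f : Fin G.k → Fin G.k := fun i => ks.get (Fin.cast hkslen.symm i) with hf
  have hfinj : Function.Injective f := by
    intro i j hij
    have h1 := (Finset.sort_nodup Finset.univ r).get_inj_iff.mp hij
    have h2 := congrArg Fin.val h1
    exact Fin.ext (show i.val = j.val from h2)
  have hfbij : Function.Bijective f := ⟨hfinj, Finite.surjective_of_injective hfinj⟩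
  set σ := Equiv.ofBijective f hfbij with hσ
  have hσf : ∀ i, σ i = f i := fun i => rfl
  have hmono : ∀ {i j : Fin G.k}, i ≤ j → key (f i) ≤ key (f j) := by
    intro i j hij
    rcases eq_or_lt_of_le hij with rfl | hlt
    · exact le_rfl
    · exact (Finset.pairwise_sort Finset.univ r).rel_get_of_lt
        (by rw [Fin.lt_def]; exact hlt)
  have hstrict : ∀ {i j : Fin G.k}, i < j → key (f i) < key (f j) := by
    intro i j hij
    refine lt_of_le_of_ne (hmono (le_of_lt hij)) (fun heq => ?_)
    exact absurd (hfinj (tkey_inj hT heq)) (ne_of_lt hij)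
  have hreflect : ∀ {i j : Fin G.k}, key (f i) ≤ key (f j) → i ≤ j := by
    intro i j hle
    by_contra hcon
    push_neg at hcon
    exact absurd hle (not_le.mpr (hstrict hcon))
  have hminc : ∀ a, key c ≤ key a := by
    intro a
    refine prefix_le ?_
    rw [hkey]
    rw [tkey_root hT c]
    exact ⟨(tpath hT c a).support.tail, (SimpleGraph.Walk.support_eq_cons _).symm⟩
  have hf0 : σ G.root = c := by
    obtain ⟨j, hj⟩ := σ.surjective c
    have h1 : key (f G.root) ≤ key (f j) := hmono (by rw [Fin.le_def]; exact Nat.zero_le _)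
    rw [hσf j] at hj
    rw [hj] at h1
    exact tkey_inj hT (le_antisymm h1 (hminc _))
  have hdesc : ∀ v u : Fin G.k, (G.permute σ).Descend v u ↔ key (σ v) <+: key (σ u) := by
    intro v u
    rw [descend_permute, hf0]
    exact walks_through_iff hT c (σ v) (σ u)
  refine ⟨σ, ⟨permute_isTree G σ hT, ?_, ?_⟩, by rw [hf0]; exact hc⟩
  · intro v u hd
    exact hreflect (prefix_le ((hdesc v u).mp hd))
  · intro v u w hd hvw hwu
    exact (hdesc v w).mpr
      (lex_interval _ _ _ (hmono hvw) (hmono hwu) ((hdesc v u).mp hd))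

end MolGraph

end Existence

/-- Maximum of a finite list with respect to a transitive relation that is total on
its distinct elements. -/
theorem exists_list_max {α : Type} (r : α → α → Prop)
    (htrans : ∀ {a b c : α}, r a b → r b c → r a c) :
    ∀ (l : List α), l ≠ [] → (∀ a ∈ l, ∀ b ∈ l, a ≠ b → r a b ∨ r b a) →
    ∃ m ∈ l, ∀ x ∈ l, x ≠ m → r x m := by
  intro l
  induction l with
  | nil => intro h; exact absurd rfl h
  | cons a l ih =>
    intro _ htot
    rcases eq_or_ne l [] with rfl | hlne
    · refine ⟨a, List.mem_singleton_self a, ?_⟩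
      intro x hx hne
      rw [List.mem_singleton] at hx
      exact absurd hx hne
    obtain ⟨m, hm, hmax⟩ := ih hlne
      (fun x hx y hy => htot x (List.mem_cons_of_mem _ hx) y (List.mem_cons_of_mem _ hy))
    by_cases ham : a = m
    · refine ⟨m, List.mem_cons_of_mem _ hm, ?_⟩
      intro x hx hxm
      rcases List.mem_cons.mp hx with rfl | hx
      · exact absurd ham hxm
      · exact hmax x hx hxm
    rcases htot a (List.mem_cons_self) m (List.mem_cons_of_mem _ hm) ham with har | hra
    · refine ⟨m, List.mem_cons_of_mem _ hm, ?_⟩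
      intro x hx hxm
      rcases List.mem_cons.mp hx with rfl | hx
      · exact har
      · exact hmax x hx hxm
    · refine ⟨a, List.mem_cons_self, ?_⟩
      intro x hx hxa
      rcases List.mem_cons.mp hx with rfl | hx
      · exact absurd rfl hxa
      by_cases hxm : x = m
      · subst hxm; exact hra
      · exact htrans (hmax x hx hxm) hra

open MolGraph

/-- Definition 4 of the paper is well formed: for every molecular tree `G`, among the
molecular trees obtained from `G` by a permutation of vertices whose root (vertex `1`)
is central in `G`, there exists exactly one `≺`-largest element — the canonical
molecular tree of `G`. -/
theorem canonical_molecular_tree_exists_unique {El : Type} [LinearOrder El]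
    (G : MolGraph El) (hG : G.IsMolTree) :
    ∃! C : MolGraph El,
      ((∃ σ : Equiv.Perm (Fin G.k),
          C = G.permute σ ∧ C.IsMolTree ∧ IsCentral G.toSimple (σ G.root)) ∧
        ∀ C' : MolGraph El,
          (∃ σ : Equiv.Perm (Fin G.k),
            C' = G.permute σ ∧ C'.IsMolTree ∧ IsCentral G.toSimple (σ G.root)) →
          C' ≠ C → PrecT C' C) := by
  classical
  set P : MolGraph El → Prop := fun C => ∃ σ : Equiv.Perm (Fin G.k),
    C = G.permute σ ∧ C.IsMolTree ∧ IsCentral G.toSimple (σ G.root) with hP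
  have hfinite : {C | P C}.Finite := by
    refine Set.Finite.subset
      (Set.finite_range (fun σ : Equiv.Perm (Fin G.k) => G.permute σ)) ?_
    rintro C ⟨σ, rfl, -, -⟩
    exact ⟨σ, rfl⟩
  obtain ⟨σ₀, h0tree, h0cent⟩ := exists_good_perm G hG
  have hmem0 : P (G.permute σ₀) := ⟨σ₀, rfl, h0tree, h0cent⟩
  set l := hfinite.toFinset.toList with hl
  have hmeml : ∀ C, C ∈ l ↔ P C := by
    intro C
    rw [hl, Finset.mem_toList, Set.Finite.mem_toFinset]
    rfl
  have hlne : l ≠ [] := by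
    intro h
    have := (hmeml _).mpr hmem0
    rw [h] at this
    exact absurd this (List.not_mem_nil)
  have htot : ∀ C₁ ∈ l, ∀ C₂ ∈ l, C₁ ≠ C₂ → PrecT C₁ C₂ ∨ PrecT C₂ C₁ := by
    intro C₁ h1 C₂ h2 hne12
    obtain ⟨σ₁, rfl, ht1, -⟩ := (hmeml _).mp h1
    obtain ⟨σ₂, rfl, ht2, -⟩ := (hmeml _).mp h2
    rcases RTree.prec_trichotomy ((G.permute σ₁).toRTree (G.permute σ₁).root)
      ((G.permute σ₂).toRTree (G.permute σ₂).root) with h | h | h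
    · exact Or.inl h
    · exact absurd (permute_eq_of_toRTree_eq G σ₁ σ₂ ht1 ht2 h) hne12
    · exact Or.inr h
  obtain ⟨m, hm, hmax⟩ := exists_list_max (@PrecT El _)
    (fun {a b c} h1 h2 => RTree.prec_trans _ _ _ h1 h2) l hlne htot
  refine ⟨m, ⟨(hmeml m).mp hm, fun C' hC' hne' => hmax C' ((hmeml C').mpr hC') hne'⟩, ?_⟩
  rintro C ⟨hCP, hCmax⟩
  by_contra hne'
  have h1 : PrecT C m := hmax C ((hmeml C).mpr hCP) hne'
  have h2 : PrecT m C := hCmax m ((hmeml m).mp hm) (Ne.symm hne')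
  exact RTree.prec_asymm h1 h2
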